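/- Let F, F₁, F₂ be additive functors from the category of R-modules to the category of S-modules such that F is naturally isomorphic to the direct sum F₁ ⊕ F₂. If F preserves filtered colimits, then both F₁ and F₂ preserve filtered colimits. -/

import Mathlib

open CategoryTheory CategoryTheory.Limits

/-- Transport a cocone over `K ⋙ G` to a cocone over `K ⋙ F` along `r : F ⟶ G`. -/
@[simps]
def retractCocone {C D : Type*} [Category C] [Category D]
    {J : Type*} [Category J] {K : J ⥤ C} {F G : C ⥤ D}
    (r : F ⟶ G) (s : Cocone (K ⋙ G)) : Cocone (K ⋙ F) where
  pt := s.pt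
  ι := { app := fun j => r.app (K.obj j) ≫ s.ι.app j
         naturality := fun j j' f => by
           have h1 := r.naturality (K.map f)
           have h2 := s.ι.naturality f
           dsimp at h1 h2 ⊢
           rw [Category.comp_id] at h2
           rw [Category.comp_id, ← Category.assoc, h1, Category.assoc, h2] }

/-- A retract (in the functor category) of a functor preserving a colimit also
preserves that colimit. -/
def isColimitMapCoconeOfRetract {C D : Type*} [Category C] [Category D]
    {J : Type*} [Category J] {K : J ⥤ C} {F G : C ⥤ D}
    (i : G ⟶ F) (r : F ⟶ G) (hir : i ≫ r = 𝟙 G)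
    {c : Cocone K} (hF : IsColimit (F.mapCocone c)) :
    IsColimit (G.mapCocone c) := by
  have hirApp : ∀ X : C, i.app X ≫ r.app X = 𝟙 (G.obj X) := fun X => by
    simpa using congrArg (fun α => NatTrans.app α X) hir
  refine
    { desc := fun s => i.app c.pt ≫ hF.desc (retractCocone r s)
      fac := ?_
      uniq := ?_ }
  · intro s j
    have h1 := i.naturality (c.ι.app j)
    simp only [Functor.const_obj_obj] at h1
    have hfac := hF.fac (retractCocone r s) j
    dsimp at hfac
    dsimp
    erw [← Category.assoc, h1, Category.assoc, hfac, ← Category.assoc, hirApp,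
      Category.id_comp]
  · intro s m hm
    have key : r.app c.pt ≫ m = hF.desc (retractCocone r s) := by
      refine hF.uniq (retractCocone r s) (r.app c.pt ≫ m) fun j => ?_
      have h1 := r.naturality (c.ι.app j)
      simp only [Functor.const_obj_obj] at h1
      dsimp
      have hm' := hm j
      dsimp at hm'
      erw [← Category.assoc, h1, Category.assoc, hm']
      rfl
    calc m = (i.app c.pt ≫ r.app c.pt) ≫ m := by rw [hirApp, Category.id_comp]
    _ = i.app c.pt ≫ (r.app c.pt ≫ m) := by rw [Category.assoc]
    _ = _ := by rw [key]

lemma preservesFilteredColimits_of_retract {C D : Type*} [Category C] [Category D]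
    {F G : C ⥤ D} (i : G ⟶ F) (r : F ⟶ G) (hir : i ≫ r = 𝟙 G)
    [PreservesFilteredColimits F] : PreservesFilteredColimits G := by
  constructor
  intro J _ _
  constructor
  intro K
  constructor
  intro c hc
  exact ⟨isColimitMapCoconeOfRetract i r hir (isColimitOfPreserves F hc)⟩

/-- If an additive functor `F` between module categories is naturally isomorphic to the
direct sum (biproduct) of `F₁` and `F₂`, and `F` preserves filtered colimits, then
both `F₁` and `F₂` preserve filtered colimits. -/
theorem stmt_0 (R S : Type) [Ring R] [Ring S]
    (F F₁ F₂ : ModuleCat R ⥤ ModuleCat S) [F.Additive] [F₁.Additive] [F₂.Additive]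
    (e : F ≅ F₁ ⊞ F₂) [PreservesFilteredColimits F] :
    PreservesFilteredColimits F₁ ∧ PreservesFilteredColimits F₂ := by
  constructor
  · exact preservesFilteredColimits_of_retract
      (biprod.inl ≫ e.inv) (e.hom ≫ biprod.fst)
      (by simp)
  · exact preservesFilteredColimits_of_retract
      (biprod.inr ≫ e.inv) (e.hom ≫ biprod.snd)
      (by simp)
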